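/- Let q be an odd prime and a a nonsquare in F_q. The group T = F_q ∪ {∞} with operation t1 * t2 = (t1·t2 + a)/(t1 + t2) (and ∞ as identity, t1 * t2 = ∞ when t1 + t2 = 0) is cyclic of order q + 1. -/

import Mathlib

open Polynomial

section TmulAux

section Aux
variable {q : ℕ} [Fact q.Prime] {a : ZMod q}

theorem myirred (ha : ¬ IsSquare a) : Irreducible (X ^ 2 - C a : (ZMod q)[X]) := by
  refine X_pow_sub_C_irreducible_of_prime Nat.prime_two fun b hb => ha ?_
  exact ⟨b, by rw [← hb]; ring⟩

theorem fne : (X ^ 2 - C a : (ZMod q)[X]) ≠ 0 := by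
  intro h
  have := congrArg (fun p => p.natDegree) h
  simp at this

variable [Fact (Irreducible (X ^ 2 - C a : (ZMod q)[X]))]

local notation "K" => AdjoinRoot (X ^ 2 - C a : (ZMod q)[X])
local notation "s" => AdjoinRoot.root (X ^ 2 - C a : (ZMod q)[X])
local notation "i" => algebraMap (ZMod q) (AdjoinRoot (X ^ 2 - C a : (ZMod q)[X]))

instance : Finite K := by
  haveI : Module.Finite (ZMod q) K := (AdjoinRoot.powerBasis fne).finite
  exact Module.finite_of_finite (ZMod q)

theorem root_sq : (s : K) ^ 2 = i a := by
  have := AdjoinRoot.eval₂_root (X ^ 2 - C a : (ZMod q)[X])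
  rw [AdjoinRoot.algebraMap_eq]
  simp at this
  linear_combination this

theorem i_inj : Function.Injective (i : ZMod q → K) := (algebraMap (ZMod q) K).injective

theorem hsub (ha : ¬ IsSquare a) (t : ZMod q) : i t - s ≠ 0 := by
  intro h
  apply ha
  have : (i t) ^ 2 = i a := by rw [sub_eq_zero] at h; rw [h]; exact root_sq
  rw [← map_pow] at this
  exact ⟨t, by have := i_inj this; rw [← this]; ring⟩

theorem hadd (ha : ¬ IsSquare a) (t : ZMod q) : i t + s ≠ 0 := by
  intro h
  apply ha
  have h' : i t = -s := eq_neg_of_add_eq_zero_left h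
  have : (i t) ^ 2 = i a := by rw [h']; rw [← root_sq]; ring
  rw [← map_pow] at this
  exact ⟨t, by have := i_inj this; rw [← this]; ring⟩

theorem charK : CharP K q :=
  charP_of_injective_ringHom (algebraMap (ZMod q) K).injective q

theorem a_pow (hq : Odd q) (ha : ¬ IsSquare a) : a ^ (q / 2) = -1 := by
  have ha0 : a ≠ 0 := fun h => ha (h ▸ ⟨0, by ring⟩)
  have hchar : ringChar (ZMod q) ≠ 2 := by
    rw [ZMod.ringChar_zmod_n]
    rintro rfl
    exact absurd (Nat.odd_iff.mp hq) (by norm_num)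
  have := FiniteField.pow_dichotomy hchar ha0
  rw [ZMod.card] at this
  rcases this with h | h
  · exact absurd ((FiniteField.isSquare_iff hchar ha0).mpr (by rw [ZMod.card]; exact h)) ha
  · exact h

theorem s_pow_q (hq : Odd q) (ha : ¬ IsSquare a) : (s : K) ^ q = -s := by
  have hq2 : q = 2 * (q / 2) + 1 := by
    have := Nat.odd_iff.mp hq; omega
  rw [congrArg (fun n => (s : K) ^ n) hq2]
  have e1 : (s : K) ^ (2 * (q / 2) + 1) = ((s : K) ^ 2) ^ (q / 2) * s := by ring
  rw [e1, root_sq, ← map_pow, a_pow hq ha]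
  simp

theorem a_ne_zero (ha : ¬ IsSquare a) : a ≠ 0 := fun h => ha (h ▸ ⟨0, by ring⟩)

theorem s_ne_zero' (ha : ¬ IsSquare a) : (s : K) ≠ 0 := by
  intro h
  have h2 : (0:K) = i a := by rw [← root_sq, h]; ring
  exact a_ne_zero ha (i_inj (by rw [← h2, map_zero])).symm

theorem two_ne_zero_K (hq : Odd q) : (2 : K) ≠ 0 := by
  haveI := charK (a := a)
  intro h
  have h2 : (q : ℕ) ∣ 2 := (CharP.cast_eq_zero_iff K q 2).mp (by exact_mod_cast h)
  have := (Nat.prime_dvd_prime_iff_eq Fact.out Nat.prime_two).mp h2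
  subst this
  exact absurd (Nat.odd_iff.mp hq) (by norm_num)

theorem val_pow_q (hq : Odd q) (ha : ¬ IsSquare a) (t : ZMod q) :
    (((i t + s) / (i t - s)) : K) ^ q = (i t - s) / (i t + s) := by
  haveI := charK (a := a)
  haveI : ExpChar (AdjoinRoot (X ^ 2 - C a : (ZMod q)[X])) q := .prime Fact.out
  rw [div_pow, add_pow_char, sub_pow_char, ← map_pow, ZMod.pow_card, s_pow_q hq ha]
  rw [sub_neg_eq_add, ← sub_eq_add_neg]

noncomputable def phi0 (hq : Odd q) (ha : ¬ IsSquare a) (t : ZMod q) : (AdjoinRoot (X ^ 2 - C a : (ZMod q)[X]))ˣ :=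
  Units.mk0 ((i t + s) / (i t - s)) (div_ne_zero (hadd ha t) (hsub ha t))

theorem phi0_pow (hq : Odd q) (ha : ¬ IsSquare a) (t : ZMod q) :
    (phi0 hq ha t) ^ (q + 1) = 1 := by
  ext
  rw [Units.val_pow_eq_pow_val, Units.val_one]
  show (((i t + s) / (i t - s)) : K) ^ (q + 1) = 1
  rw [pow_succ ((((i t + s) / (i t - s))) : K) q, val_pow_q hq ha]
  rw [div_mul_div_comm, mul_comm]
  exact div_self (mul_ne_zero (hadd ha t) (hsub ha t))

theorem phi0_ne_one (hq : Odd q) (ha : ¬ IsSquare a) (t : ZMod q) : phi0 hq ha t ≠ 1 := by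
  intro h
  have hval : ((i t + s) / (i t - s) : K) = 1 := by
    have := congrArg Units.val h
    simpa [phi0] using this
  rw [div_eq_one_iff_eq (hsub ha t)] at hval
  have h2 : (2 : K) * s = 0 := by linear_combination hval
  exact (mul_ne_zero (two_ne_zero_K (a := a) hq) (s_ne_zero' ha)) h2

theorem phi0_inj (hq : Odd q) (ha : ¬ IsSquare a) : Function.Injective (phi0 hq ha) := by
  intro t1 t2 h
  have hval : ((i t1 + s) / (i t1 - s) : K) = (i t2 + s) / (i t2 - s) := by
    have := congrArg Units.val h
    simpa [phi0] using this
  rw [div_eq_div_iff (hsub ha t1) (hsub ha t2)] at hval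
  have h2 : (2 : K) * s * (i t2 - i t1) = 0 := by linear_combination hval
  have h3 : (i t2 - i t1 : K) = 0 :=
    (mul_eq_zero.mp h2).resolve_left
      (mul_ne_zero (two_ne_zero_K (a := a) hq) (s_ne_zero' ha))
  exact (i_inj (sub_eq_zero.mp h3)).symm

noncomputable def phiN (hq : Odd q) (ha : ¬ IsSquare a) :
    Option (ZMod q) → ((powMonoidHom (q + 1)).ker :
      Subgroup (AdjoinRoot (X ^ 2 - C a : (ZMod q)[X]))ˣ)
  | none => 1
  | some t => ⟨phi0 hq ha t, by
      rw [MonoidHom.mem_ker, powMonoidHom_apply]; exact phi0_pow hq ha t⟩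

theorem phiN_inj (hq : Odd q) (ha : ¬ IsSquare a) : Function.Injective (phiN hq ha) := by
  intro x y h
  match x, y with
  | none, none => rfl
  | none, some t =>
      exact absurd (congrArg Subtype.val h).symm (phi0_ne_one hq ha t)
  | some t, none =>
      exact absurd (congrArg Subtype.val h) (phi0_ne_one hq ha t)
  | some t1, some t2 =>
      exact congrArg some (phi0_inj hq ha (Subtype.ext_iff.mp h))

theorem card_ker_le (hq : Odd q) (ha : ¬ IsSquare a) :
    Nat.card ((powMonoidHom (q + 1)).ker :
      Subgroup (AdjoinRoot (X ^ 2 - C a : (ZMod q)[X]))ˣ) ≤ q + 1 := by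
  classical
  haveI : Fintype (AdjoinRoot (X ^ 2 - C a : (ZMod q)[X])) := Fintype.ofFinite _
  haveI : IsDomain (AdjoinRoot (X ^ 2 - C a : (ZMod q)[X])) := inferInstance
  have h1 := card_nthRoots_subgroup_units (R := K) (Units.coeHom K)
    (fun _ _ h => Units.ext h) (n := q + 1) (by omega) 1
  have h2 := Polynomial.card_nthRoots (q + 1) ((Units.coeHom K) 1)
  have h3 : Nat.card ((powMonoidHom (q + 1)).ker :
      Subgroup (AdjoinRoot (X ^ 2 - C a : (ZMod q)[X]))ˣ)
      = Finset.card {g : Kˣ | g ^ (q + 1) = 1} := by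
    rw [Nat.card_eq_fintype_card, ← Fintype.card_coe]
    apply Fintype.card_congr
    apply Equiv.subtypeEquivRight
    intro x
    simp [MonoidHom.mem_ker, powMonoidHom_apply]
  omega

theorem phi_mul_zero (hq : Odd q) (ha : ¬ IsSquare a) (t1 t2 : ZMod q)
    (h : t1 + t2 = 0) : phi0 hq ha t1 * phi0 hq ha t2 = 1 := by
  have hI0 : (i t1 + i t2 : K) = 0 := by
    rw [← map_add, h, map_zero]
  ext
  rw [Units.val_mul, Units.val_one]
  show (((i t1 + s) / (i t1 - s)) : K) * ((i t2 + s) / (i t2 - s)) = 1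
  rw [div_mul_div_comm]
  have key : ((i t1 + s) * (i t2 + s) : K) = (i t1 - s) * (i t2 - s) := by
    linear_combination (2 * (s : K)) * hI0
  rw [key]
  exact div_self (mul_ne_zero (hsub ha t1) (hsub ha t2))

theorem phi_mul_some (hq : Odd q) (ha : ¬ IsSquare a) (t1 t2 : ZMod q)
    (h : t1 + t2 ≠ 0) :
    phi0 hq ha ((t1 * t2 + a) / (t1 + t2)) = phi0 hq ha t1 * phi0 hq ha t2 := by
  have hI : (i (t1 + t2) : K) ≠ 0 := fun hh => h (i_inj (by rw [hh, map_zero]))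
  set u : ZMod q := (t1 * t2 + a) / (t1 + t2) with hu
  have hiu : (i u : K) = i (t1 * t2 + a) / i (t1 + t2) := by
    rw [hu, map_div₀]
  ext
  rw [Units.val_mul]
  show (((i u + s) / (i u - s)) : K) = ((i t1 + s) / (i t1 - s)) * ((i t2 + s) / (i t2 - s))
  have hmulu : (i u : K) * i (t1 + t2) = i (t1 * t2 + a) := by
    rw [hiu, div_mul_cancel₀ _ hI]
  have e1 : (i u + s : K) = (i (t1 * t2 + a) + i (t1 + t2) * s) / i (t1 + t2) := by
    rw [eq_div_iff hI]; linear_combination hmulu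
  have e2 : (i u - s : K) = (i (t1 * t2 + a) - i (t1 + t2) * s) / i (t1 + t2) := by
    rw [eq_div_iff hI]; linear_combination hmulu
  have p1 : ((i t1 + s) * (i t2 + s) : K) = i (t1 * t2 + a) + i (t1 + t2) * s := by
    push_cast [map_add, map_mul]
    linear_combination root_sq (a := a)
  have p2 : ((i t1 - s) * (i t2 - s) : K) = i (t1 * t2 + a) - i (t1 + t2) * s := by
    push_cast [map_add, map_mul]
    linear_combination root_sq (a := a)
  rw [e1, e2, div_div_div_cancel_right₀ hI, div_mul_div_comm, p1, p2]

end Aux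

end TmulAux


/-- The operation on `T = F_q ∪ {∞}` (with `∞ = none`) given by
`t₁ * t₂ = (t₁t₂ + a)/(t₁ + t₂)` when `t₁ + t₂ ≠ 0`, `∞` when `t₁ + t₂ = 0`,
and with `∞` as identity. -/
def Tmul {q : ℕ} [Fact q.Prime] (a : ZMod q) :
    Option (ZMod q) → Option (ZMod q) → Option (ZMod q)
  | none, t => t
  | some t, none => some t
  | some t1, some t2 => if t1 + t2 = 0 then none else some ((t1 * t2 + a) / (t1 + t2))

/-- For `q` an odd prime and `a` a nonsquare in `F_q`, the group
`T = F_q ∪ {∞}` with operation `Tmul a` and identity `∞` is cyclic of order `q + 1`. -/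
theorem Tmul_cyclic (q : ℕ) [Fact q.Prime] (hq : Odd q)
    (a : ZMod q) (ha : ¬ IsSquare a) :
    ∃ G : CommGroup (Option (ZMod q)),
      (∀ x y : Option (ZMod q), G.mul x y = Tmul a x y) ∧
      G.one = none ∧
      (@IsCyclic _ (@ZPow.toPow _ G.toGroup.toDivInvMonoid.toZPow)) ∧
      Nat.card (Option (ZMod q)) = q + 1 := by
  haveI : Fact (Irreducible (X ^ 2 - C a : (ZMod q)[X])) := ⟨myirred ha⟩
  set N := ((powMonoidHom (q + 1)).ker :
    Subgroup (AdjoinRoot (X ^ 2 - C a : (ZMod q)[X]))ˣ) with hN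
  have hcardOpt : Nat.card (Option (ZMod q)) = q + 1 := by
    have : Nat.card (Option (ZMod q)) = Nat.card (ZMod q) + 1 := by
      simp [Nat.card_eq_fintype_card, Fintype.card_option]
    rw [this, Nat.card_zmod]
  have hinj := phiN_inj hq ha
  have hbij : Function.Bijective (phiN hq ha) := by
    rw [Nat.bijective_iff_injective_and_card]
    have h1 : Nat.card (Option (ZMod q)) ≤ Nat.card N :=
      Nat.card_le_card_of_injective _ hinj
    have h2 : Nat.card N ≤ q + 1 := card_ker_le hq ha
    exact ⟨hinj, Nat.le_antisymm h1 (by rw [hcardOpt]; exact h2)⟩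
  let e : Option (ZMod q) ≃ N := Equiv.ofBijective _ hbij
  have he : ∀ x, e x = phiN hq ha x := fun _ => rfl
  letI G : CommGroup (Option (ZMod q)) := e.commGroup
  have hmul : ∀ x y : Option (ZMod q), G.mul x y = e.symm (e x * e y) := fun _ _ => rfl
  have hmul2 : ∀ x y : Option (ZMod q), x * y = e.symm (e x * e y) := fun _ _ => rfl
  have hnone : e none = 1 := rfl
  have hkey : ∀ x y : Option (ZMod q), e (Tmul a x y) = e x * e y := by
    intro x y
    match x, y with
    | none, y => simp [Tmul, hnone]
    | some t, none => simp [Tmul, hnone]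
    | some t1, some t2 =>
      rw [he, he, he]
      by_cases h0 : t1 + t2 = 0
      · rw [show Tmul a (some t1) (some t2) = none from by simp [Tmul, h0]]
        show (1 : N) = _
        apply Subtype.ext
        exact (phi_mul_zero hq ha t1 t2 h0).symm
      · rw [show Tmul a (some t1) (some t2) = some ((t1 * t2 + a) / (t1 + t2)) from by
          simp [Tmul, h0]]
        apply Subtype.ext
        exact phi_mul_some hq ha t1 t2 h0
  refine ⟨G, ?_, ?_, ?_, hcardOpt⟩
  · intro x y
    rw [hmul, Equiv.symm_apply_eq, ← hkey]
  · show e.symm 1 = none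
    rw [Equiv.symm_apply_eq]
    exact rfl
  · haveI : IsCyclic N := Subgroup.isCyclic N
    have hsurj : Function.Surjective (e.symm : N → Option (ZMod q)) := e.symm.surjective
    let psi : N →* Option (ZMod q) := MonoidHom.mk' (e.symm) (by
      intro x y
      rw [hmul2, Equiv.apply_symm_apply, Equiv.apply_symm_apply])
    exact isCyclic_of_surjective psi hsurj
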